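/- arXiv:1102.4309 — 3 statements merged into one kernel-verified Lean document; each statement's English description precedes it below -/
import Mathlib

section
/- For every h ∈ Im(A), the functional x ↦ ⟨h, A x⟩ belongs to the annihilator of the kernel of A, and the resulting linear map Ã : Im(A) → N⊥(A) is a Banach space isomorphism (continuous linear bijection with continuous inverse). -/
open RealInnerProductSpace Topology

/-- The conullspace `N⊥(A)`: the annihilator in `X*` of the kernel of `A`. -/
noncomputable def conull {X H : Type*} [NormedAddCommGroup X] [NormedSpace ℝ X]
    [NormedAddCommGroup H] [InnerProductSpace ℝ H] (A : X →L[ℝ] H) :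
    Submodule ℝ (X →L[ℝ] ℝ) where
  carrier := {f | ∀ x, A x = 0 → f x = 0}
  add_mem' := fun hf hg x hx => by simp [hf x hx, hg x hx]
  zero_mem' := fun x _ => rfl
  smul_mem' := fun c f hf x hx => by simp [hf x hx]

set_option maxHeartbeats 1000000 in
set_option synthInstance.maxHeartbeats 400000 in
/-- For every `h ∈ Im(A)` the functional `x ↦ ⟪h, A x⟫` belongs to the
annihilator of the kernel of `A`, and the resulting map `Ã : Im(A) → N⊥(A)` is a Banach
space isomorphism (a continuous linear bijection with continuous inverse). -/
theorem atilde_isomorphism {X H : Type*} [NormedAddCommGroup X] [NormedSpace ℝ X]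
    [CompleteSpace X] [NormedAddCommGroup H] [InnerProductSpace ℝ H] [CompleteSpace H]
    (A : X →L[ℝ] H) (hclosed : IsClosed (Set.range A)) :
    (∀ h ∈ LinearMap.range (A : X →ₗ[ℝ] H), (innerSL ℝ h).comp A ∈ conull A) ∧
      ∃ e : (LinearMap.range (A : X →ₗ[ℝ] H)) ≃L[ℝ] (conull A),
        ∀ h : LinearMap.range (A : X →ₗ[ℝ] H), (e h : X →L[ℝ] ℝ) = (innerSL ℝ (h : H)).comp A := by
  -- membership
  have hmem : ∀ h : H, (innerSL ℝ h).comp A ∈ conull A := by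
    intro h x hx
    simp [hx]
  refine ⟨fun h _ => hmem h, ?_⟩
  set R : Submodule ℝ H := LinearMap.range (A : X →ₗ[ℝ] H) with hR
  have hRclosed : IsClosed (R : Set H) := by
    have : (R : Set H) = Set.range A := by
      ext y; simp [hR, LinearMap.mem_range]
    rwa [this]
  haveI : CompleteSpace R := hRclosed.completeSpace_coe
  have hconullclosed : IsClosed ((conull A : Set (X →L[ℝ] ℝ))) := by
    have : (conull A : Set (X →L[ℝ] ℝ)) =
        ⋂ x ∈ {x : X | A x = 0}, {f : X →L[ℝ] ℝ | f x = 0} := by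
      ext f
      simp [conull, Set.mem_iInter]
    rw [this]
    exact isClosed_biInter fun x _ =>
      isClosed_eq (ContinuousLinearMap.apply ℝ ℝ x).continuous continuous_const
  haveI : CompleteSpace (conull A) := hconullclosed.completeSpace_coe
  -- the forward map as a continuous linear map
  let Φ : R →L[ℝ] conull A :=
    LinearMap.mkContinuous (E := R) (F := conull A)
      { toFun := fun h => ⟨(innerSL ℝ (h : H)).comp A, hmem _⟩
        map_add' := fun h g => by
          ext x
          simp [inner_add_left]
        map_smul' := fun c h => by
          ext x
          simp [inner_smul_left] }
      ‖A‖
      (by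
        intro h
        calc ‖(innerSL ℝ (h : H)).comp A‖ ≤ ‖innerSL ℝ (h : H)‖ * ‖A‖ :=
              ContinuousLinearMap.opNorm_comp_le _ _
          _ ≤ ‖(h : H)‖ * ‖A‖ := by
              gcongr; simp [innerSL_apply_norm]
          _ = ‖A‖ * ‖h‖ := by rw [mul_comm]; rfl)
  have hΦ : ∀ h : R, ((Φ h : X →L[ℝ] ℝ)) = (innerSL ℝ (h : H)).comp A := fun h => rfl
  -- injectivity
  have hinj : LinearMap.ker (Φ : R →ₗ[ℝ] conull A) = ⊥ := by
    rw [LinearMap.ker_eq_bot']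
    intro h hh
    obtain ⟨x, hx⟩ := h.2
    have : ((Φ h : X →L[ℝ] ℝ)) x = 0 := by rw [show Φ h = 0 from hh]; rfl
    rw [hΦ] at this
    have h0 : ⟪(h : H), (h : H)⟫ = 0 := by
      simpa [show A x = (h : H) from hx] using this
    ext
    exact inner_self_eq_zero.mp h0
  -- surjectivity
  have hsurj : LinearMap.range (Φ : R →ₗ[ℝ] conull A) = ⊤ := by
    rw [LinearMap.range_eq_top]
    rintro ⟨f, hf⟩
    -- codomain restriction of A
    let A' : X →L[ℝ] R := A.codRestrict R fun x => LinearMap.mem_range_self _ x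
    have hA'surj : Function.Surjective A' := by
      rintro ⟨y, hy⟩
      obtain ⟨x, hx⟩ := hy
      exact ⟨x, Subtype.ext hx⟩
    have hker : LinearMap.ker (A : X →ₗ[ℝ] H) ≤ LinearMap.ker (f : X →ₗ[ℝ] ℝ) := by
      intro x hx
      exact hf x hx
    let e := LinearMap.quotKerEquivRange (A : X →ₗ[ℝ] H)
    let g : R →ₗ[ℝ] ℝ :=
      ((LinearMap.ker (A : X →ₗ[ℝ] H)).liftQ (f : X →ₗ[ℝ] ℝ) hker).comp e.symm.toLinearMap
    have hge : ∀ x : X, g (A' x) = f x := by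
      intro x
      have h1 : e (Submodule.Quotient.mk x) = A' x := by
        apply Subtype.ext
        exact LinearMap.quotKerEquivRange_apply_mk _ x
      have h2 : e.symm (A' x) = Submodule.Quotient.mk x := by
        rw [← h1, LinearEquiv.symm_apply_apply]
      exact (congrArg ((LinearMap.ker (A : X →ₗ[ℝ] H)).liftQ (f : X →ₗ[ℝ] ℝ) hker) h2).trans rfl
    have hgcont : Continuous g := by
      have hq : IsQuotientMap A' := A'.isQuotientMap hA'surj
      rw [hq.continuous_iff]
      have : (g ∘ A') = f := by funext x; exact hge x
      rw [this]
      exact f.continuous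
    let G : R →L[ℝ] ℝ := ⟨g, hgcont⟩
    let h : R := (InnerProductSpace.toDual ℝ R).symm G
    refine ⟨h, ?_⟩
    apply Subtype.ext
    rw [show (Φ : R →ₗ[ℝ] conull A) h = Φ h from rfl, hΦ]
    ext x
    have h3 : ⟪h, A' x⟫ = G (A' x) := InnerProductSpace.toDual_symm_apply
    have h4 : ⟪(h : H), A x⟫ = ⟪h, A' x⟫ := rfl
    simp only [ContinuousLinearMap.comp_apply, innerSL_apply_apply]
    rw [h4, h3]
    exact hge x
  exact ⟨ContinuousLinearEquiv.ofBijective (σ := RingHom.id ℝ) (σ' := RingHom.id ℝ) (E := R) (F := conull A) Φ hinj hsurj, fun h => by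
    rw [ContinuousLinearEquiv.coeFn_ofBijective]; rfl⟩
end

section
/- If f ∈ X* vanishes on the kernel of A (where A has closed range), then there exists a unique h in the image of A with f(x) = ⟨h, A x⟩ for all x ∈ X. -/
open RealInnerProductSpace

/-- generalized Riesz representation: if `f ∈ X*` vanishes on the kernel of
`A` (where `A` has closed range), then there is a unique `h` in the image of `A` with
`f x = ⟪h, A x⟫` for all `x`. -/
theorem generalized_riesz {X H : Type*} [NormedAddCommGroup X] [NormedSpace ℝ X]
    [CompleteSpace X] [NormedAddCommGroup H] [InnerProductSpace ℝ H] [CompleteSpace H]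
    (A : X →L[ℝ] H) (hclosed : IsClosed (Set.range A))
    (f : X →L[ℝ] ℝ) (hf : ∀ x, A x = 0 → f x = 0) :
    ∃! h : H, h ∈ LinearMap.range (A : X →ₗ[ℝ] H) ∧ ∀ x, f x = ⟪h, A x⟫ := by
  set K : Submodule ℝ H := LinearMap.range (A : X →ₗ[ℝ] H) with hK
  have hKc : IsClosed (K : Set H) := by
    simpa [hK, LinearMap.coe_range] using hclosed
  haveI : CompleteSpace K := hKc.completeSpace_coe
  let A' : X →L[ℝ] K := A.codRestrict K (fun x => LinearMap.mem_range_self _ x)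
  have hsurj : Function.Surjective A' := by
    rintro ⟨y, x, rfl⟩
    exact ⟨x, rfl⟩
  obtain ⟨C, hC0, hC⟩ := A'.exists_preimage_norm_le hsurj
  have hker : LinearMap.ker (A' : X →ₗ[ℝ] K) ≤ LinearMap.ker (f : X →ₗ[ℝ] ℝ) := by
    intro x hx
    have hx' : A' x = 0 := hx
    have : A x = 0 := by
      have := congrArg (Subtype.val) hx'
      simpa [A'] using this
    simpa using hf x this
  let e := LinearMap.quotKerEquivOfSurjective (A' : X →ₗ[ℝ] K) hsurj
  let g : K →ₗ[ℝ] ℝ :=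
    (Submodule.liftQ (LinearMap.ker (A' : X →ₗ[ℝ] K)) (f : X →ₗ[ℝ] ℝ) hker).comp
      e.symm.toLinearMap
  have hg : ∀ x : X, g (A' x) = f x := by
    intro x
    have he : e (Submodule.Quotient.mk x) = A' x := rfl
    have : e.symm (A' x) = Submodule.Quotient.mk x := by
      rw [← he, e.symm_apply_apply]
    simp [g, this]
  have hgb : ∀ y : K, ‖g y‖ ≤ (‖f‖ * C) * ‖y‖ := by
    intro y
    obtain ⟨x, hx, hxn⟩ := hC y
    calc ‖g y‖ = ‖f x‖ := by rw [← hx, hg]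
      _ ≤ ‖f‖ * ‖x‖ := f.le_opNorm x
      _ ≤ ‖f‖ * (C * ‖y‖) := by
          exact mul_le_mul_of_nonneg_left hxn (norm_nonneg f)
      _ = (‖f‖ * C) * ‖y‖ := by ring
  let G : K →L[ℝ] ℝ := g.mkContinuous (‖f‖ * C) hgb
  set h0 : K := (InnerProductSpace.toDual ℝ K).symm G with hh0
  have hrep : ∀ y : K, ⟪h0, y⟫ = G y := fun y =>
    InnerProductSpace.toDual_symm_apply
  refine ⟨(h0 : H), ⟨h0.2, ?_⟩, ?_⟩
  · intro x
    have : ⟪h0, A' x⟫ = G (A' x) := hrep (A' x)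
    have hGg : G (A' x) = f x := hg x
    have hcoe : ⟪h0, A' x⟫ = ⟪(h0 : H), A x⟫ := rfl
    rw [← hGg, ← this, hcoe]
  · rintro h' ⟨hmem, hrep'⟩
    have hd : (h' - (h0 : H)) ∈ K := K.sub_mem hmem h0.2
    obtain ⟨x0, hx0⟩ := hd
    have hall : ∀ x : X, ⟪h' - (h0 : H), A x⟫ = 0 := by
      intro x
      have h1 : f x = ⟪h', A x⟫ := hrep' x
      have h2 : f x = ⟪(h0 : H), A x⟫ := by
        have : ⟪h0, A' x⟫ = G (A' x) := hrep (A' x)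
        have hGg : G (A' x) = f x := hg x
        have hcoe : ⟪h0, A' x⟫ = ⟪(h0 : H), A x⟫ := rfl
        rw [← hGg, ← this, hcoe]
      rw [inner_sub_left, ← h1, ← h2, sub_self]
    have h3 : ⟪h' - (h0 : H), h' - (h0 : H)⟫ = 0 := by
      have := hall x0
      rwa [show A x0 = h' - (h0 : H) from hx0] at this
    exact sub_eq_zero.mp (inner_self_eq_zero.mp h3)
end

section
/- The composition Ã ∘ Â : X/ker(A) → N⊥(A), sending x + ker(A) to the functional y ↦ ⟨A x, A y⟩, is a Banach space isomorphism with operator norm ‖Ã Â‖ = ‖A‖². -/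
open RealInnerProductSpace

set_option maxHeartbeats 2000000 in
/-- The composition `Ã ∘ Â : X/ker(A) → N⊥(A)`, sending `x + ker(A)` to the
functional `y ↦ ⟪A x, A y⟫`, is a Banach space isomorphism with operator norm `‖Ã Â‖ = ‖A‖²`. -/
theorem atilde_ahat_iso {X H : Type*} [NormedAddCommGroup X] [NormedSpace ℝ X]
    [CompleteSpace X] [NormedAddCommGroup H] [InnerProductSpace ℝ H] [CompleteSpace H]
    (A : X →L[ℝ] H) (hclosed : IsClosed (Set.range A))
    (T : (X ⧸ LinearMap.ker (A : X →ₗ[ℝ] H)) →L[ℝ] (X →L[ℝ] ℝ))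
    (hT : ∀ x y : X, T (Submodule.Quotient.mk x) y = ⟪A x, A y⟫) :
    (∃ e : (X ⧸ LinearMap.ker (A : X →ₗ[ℝ] H)) ≃L[ℝ] (conull A),
        ∀ q : X ⧸ LinearMap.ker (A : X →ₗ[ℝ] H), (e q : X →L[ℝ] ℝ) = T q) ∧
      ‖T‖ = ‖A‖ ^ 2 := by
  classical
  haveI : IsClosed ((LinearMap.ker (A : X →ₗ[ℝ] H) : Submodule ℝ X) : Set X) := ContinuousLinearMap.isClosed_ker A
  -- the range as a complete subspace
  set R : Submodule ℝ H := LinearMap.range (A : X →ₗ[ℝ] H) with hR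
  have hRclosed : IsClosed (R : Set H) := by
    have : (R : Set H) = Set.range A := by
      ext h; simp [hR, LinearMap.mem_range]
    rwa [this]
  haveI : CompleteSpace R := hRclosed.completeSpace_coe
  set B : X →L[ℝ] R := A.codRestrict R (fun x => LinearMap.mem_range_self _ x) with hB
  have hBsurj : Function.Surjective B := by
    rintro ⟨h, x, rfl⟩
    exact ⟨x, rfl⟩
  obtain ⟨C, hCpos, hC⟩ := B.exists_preimage_norm_le hBsurj
  choose s hs hns using hC
  have hAs : ∀ h : R, A (s h) = (h : H) := fun h => congrArg Subtype.val (hs h)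
  -- T lands in conull A
  have hmem : ∀ q, T q ∈ conull A := by
    intro q
    obtain ⟨x, rfl⟩ := Submodule.Quotient.mk_surjective _ q
    intro y hy
    rw [hT x y, hy, inner_zero_right]
  -- conull A is closed, hence complete
  have hconull_closed : IsClosed ((conull A : Submodule ℝ (X →L[ℝ] ℝ)) : Set (X →L[ℝ] ℝ)) := by
    have heq : ((conull A : Submodule ℝ (X →L[ℝ] ℝ)) : Set (X →L[ℝ] ℝ))
        = ⋂ x ∈ {x : X | A x = 0}, {f : X →L[ℝ] ℝ | f x = 0} := by
      ext f
      simp only [Set.mem_iInter, Set.mem_setOf_eq]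
      exact Iff.rfl
    rw [heq]
    exact isClosed_biInter fun x _ => isClosed_eq
      ((ContinuousLinearMap.apply ℝ ℝ x).continuous) continuous_const
  haveI : CompleteSpace (conull A) := hconull_closed.completeSpace_coe
  -- the codomain-restricted map
  set Tc : (X ⧸ LinearMap.ker (A : X →ₗ[ℝ] H)) →L[ℝ] (conull A) := T.codRestrict (conull A) hmem with hTc
  -- injectivity
  have hker : LinearMap.ker (Tc : (X ⧸ LinearMap.ker (A : X →ₗ[ℝ] H)) →ₗ[ℝ] (conull A)) = ⊥ := by
    rw [LinearMap.ker_eq_bot']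
    intro q hq
    obtain ⟨x, rfl⟩ := Submodule.Quotient.mk_surjective _ q
    have h0 : T (Submodule.Quotient.mk x) = 0 := congrArg Subtype.val hq
    have : (0 : ℝ) = ⟪A x, A x⟫ := by rw [← hT x x, h0]; rfl
    have hAx : A x = 0 := by
      have := (inner_self_eq_zero (𝕜 := ℝ)).mp this.symm
      exact this
    exact (Submodule.Quotient.mk_eq_zero _).mpr hAx
  -- surjectivity
  have hrange : LinearMap.range (Tc : (X ⧸ LinearMap.ker (A : X →ₗ[ℝ] H)) →ₗ[ℝ] (conull A)) = ⊤ := by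
    rw [LinearMap.range_eq_top]
    rintro ⟨f, hf⟩
    -- f agrees on points with equal image under A
    have hfeq : ∀ x y : X, A x = A y → f x = f y := by
      intro x y hxy
      have : f (x - y) = 0 := hf _ (by rw [map_sub, hxy, sub_self])
      rw [map_sub] at this; linarith
    -- the induced functional on the range of A
    let g : R →ₗ[ℝ] ℝ :=
      { toFun := fun h => f (s h)
        map_add' := by
          intro h h'
          show f (s (h + h')) = f (s h) + f (s h')
          have heq : f (s (h + h')) = f (s h + s h') := by
            apply hfeq
            rw [map_add, hAs, hAs, hAs]; rfl
          rw [heq, map_add]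
        map_smul' := by
          intro c h
          show f (s (c • h)) = c • f (s h)
          have heq : f (s (c • h)) = f (c • s h) := by
            apply hfeq
            rw [map_smul, hAs, hAs]; rfl
          rw [heq, map_smul] }
    have hgbound : ∀ h : R, ‖g h‖ ≤ (‖f‖ * C) * ‖h‖ := by
      intro h
      calc ‖f (s h)‖ ≤ ‖f‖ * ‖s h‖ := f.le_opNorm _
        _ ≤ ‖f‖ * (C * ‖h‖) := by
            apply mul_le_mul_of_nonneg_left (hns h) (norm_nonneg f)
        _ = (‖f‖ * C) * ‖h‖ := by ring
    let gc : R →L[ℝ] ℝ := g.mkContinuous _ hgbound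
    -- Riesz representation
    set h0 : R := (InnerProductSpace.toDual ℝ R).symm gc with hh0
    obtain ⟨x0, hx0⟩ := h0.2
    refine ⟨Submodule.Quotient.mk x0, ?_⟩
    apply Subtype.ext
    show T (Submodule.Quotient.mk x0) = f
    ext y
    rw [hT x0 y]
    have h1 : ⟪A x0, A y⟫ = ⟪(h0 : H), ((B y : R) : H)⟫ := by
      rw [show A x0 = h0 from hx0]; rfl
    have h2 : ⟪(h0 : H), ((B y : R) : H)⟫ = ⟪h0, B y⟫ := rfl
    have h3 : ⟪h0, B y⟫ = gc (B y) := by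
      rw [hh0]
      exact InnerProductSpace.toDual_symm_apply
    have h4 : gc (B y) = f (s (B y)) := rfl
    have h5 : f (s (B y)) = f y := hfeq _ _ (by rw [hAs]; rfl)
    rw [h1, h2, h3, h4, h5]
  -- the equivalence
  have hbij : Function.Bijective Tc :=
    ⟨(injective_iff_map_eq_zero Tc).mpr (fun a ha => LinearMap.ker_eq_bot'.mp hker a ha), LinearMap.range_eq_top.mp hrange⟩
  let el : (X ⧸ LinearMap.ker (A : X →ₗ[ℝ] H)) ≃ₗ[ℝ] (conull A) :=
    LinearEquiv.ofBijective (Tc : (X ⧸ LinearMap.ker (A : X →ₗ[ℝ] H)) →ₗ[ℝ] (conull A)) hbij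
  have hel : ∀ q, el q = Tc q := fun q => rfl
  have hop : IsOpenMap Tc := ContinuousLinearMap.isOpenMap (𝕜 := ℝ) (𝕜' := ℝ) (E := X ⧸ LinearMap.ker (A : X →ₗ[ℝ] H)) (F := conull A) Tc hbij.2
  have hcont_inv : Continuous el.symm := by
    rw [continuous_def]
    intro U hU
    have himg : ⇑el.symm ⁻¹' U = ⇑Tc '' U := by
      ext v
      constructor
      · intro hv
        exact ⟨el.symm v, hv, by rw [← hel, el.apply_symm_apply]⟩
      · rintro ⟨u, hu, rfl⟩
        show el.symm (Tc u) ∈ U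
        rw [← hel, el.symm_apply_apply]
        exact hu
    rw [himg]
    exact hop U hU
  refine ⟨⟨{ el with continuous_toFun := Tc.continuous, continuous_invFun := hcont_inv }, ?_⟩, ?_⟩
  · intro q
    rfl
  -- norm equality
  · have hub : ‖T‖ ≤ ‖A‖ ^ 2 := by
      apply ContinuousLinearMap.opNorm_le_bound _ (by positivity)
      intro q
      have key : ∀ m : X, Submodule.Quotient.mk m = q → ‖T q‖ ≤ ‖A‖ ^ 2 * ‖m‖ := by
        intro m hm
        rw [← hm]
        apply ContinuousLinearMap.opNorm_le_bound _ (by positivity)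
        intro y
        rw [hT m y]
        calc ‖⟪A m, A y⟫‖ ≤ ‖A m‖ * ‖A y‖ := norm_inner_le_norm _ _
          _ ≤ (‖A‖ * ‖m‖) * (‖A‖ * ‖y‖) := by
              apply mul_le_mul (A.le_opNorm m) (A.le_opNorm y) (norm_nonneg _) (by positivity)
          _ = ‖A‖ ^ 2 * ‖m‖ * ‖y‖ := by ring
      have : ∀ ε > 0, ‖T q‖ ≤ ‖A‖ ^ 2 * ‖q‖ + ‖A‖ ^ 2 * ε := by
        intro ε hε
        obtain ⟨m, hm, hmn⟩ := Submodule.Quotient.norm_mk_lt q hε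
        calc ‖T q‖ ≤ ‖A‖ ^ 2 * ‖m‖ := key m hm
          _ ≤ ‖A‖ ^ 2 * (‖q‖ + ε) := by
              apply mul_le_mul_of_nonneg_left hmn.le (by positivity)
          _ = ‖A‖ ^ 2 * ‖q‖ + ‖A‖ ^ 2 * ε := by ring
      by_cases hA0 : ‖A‖ ^ 2 = 0
      · have := this 1 one_pos
        simpa [hA0] using this
      · have hApos : 0 < ‖A‖ ^ 2 := lt_of_le_of_ne (by positivity) (Ne.symm hA0)
        by_contra hlt
        push_neg at hlt
        set ε := (‖T q‖ - ‖A‖ ^ 2 * ‖q‖) / (2 * ‖A‖ ^ 2) with hεdef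
        have hεpos : 0 < ε := by
          apply div_pos (by linarith) (by positivity)
        have := this ε hεpos
        have hcontr : ‖A‖ ^ 2 * ε < ‖T q‖ - ‖A‖ ^ 2 * ‖q‖ := by
          rw [hεdef]
          rw [mul_div_assoc']
          rw [div_lt_iff₀ (by positivity)]
          nlinarith [hApos]
        linarith
    have hlb : ‖A‖ ^ 2 ≤ ‖T‖ := by
      have hAle : ‖A‖ ≤ Real.sqrt ‖T‖ := by
        apply ContinuousLinearMap.opNorm_le_bound _ (Real.sqrt_nonneg _)
        intro x
        have h1 : ‖A x‖ ^ 2 = T (Submodule.Quotient.mk x) x := by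
          rw [hT x x, real_inner_self_eq_norm_sq]
        have h2 : T (Submodule.Quotient.mk x) x ≤ ‖T‖ * ‖x‖ ^ 2 := by
          calc T (Submodule.Quotient.mk x) x ≤ ‖T (Submodule.Quotient.mk x) x‖ := le_abs_self _
            _ ≤ ‖T (Submodule.Quotient.mk x)‖ * ‖x‖ := (T _).le_opNorm x
            _ ≤ (‖T‖ * ‖Submodule.Quotient.mk (p := LinearMap.ker (A : X →ₗ[ℝ] H)) x‖) * ‖x‖ := by
                apply mul_le_mul_of_nonneg_right (T.le_opNorm _) (norm_nonneg x)
            _ ≤ (‖T‖ * ‖x‖) * ‖x‖ := by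
                apply mul_le_mul_of_nonneg_right _ (norm_nonneg x)
                exact mul_le_mul_of_nonneg_left (Submodule.Quotient.norm_mk_le _ x) (norm_nonneg T)
            _ = ‖T‖ * ‖x‖ ^ 2 := by ring
        have h3 : ‖A x‖ ^ 2 ≤ (Real.sqrt ‖T‖ * ‖x‖) ^ 2 := by
          rw [mul_pow, Real.sq_sqrt (norm_nonneg T)]
          linarith [h1, h2]
        have h4 := Real.sqrt_le_sqrt h3
        rwa [Real.sqrt_sq (norm_nonneg _), Real.sqrt_sq (by positivity)] at h4
      calc ‖A‖ ^ 2 ≤ (Real.sqrt ‖T‖) ^ 2 := by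
            apply pow_le_pow_left₀ (norm_nonneg A) hAle
        _ = ‖T‖ := Real.sq_sqrt (norm_nonneg T)
    linarith
end
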